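/- arXiv:1706.05390 — 2 statements merged into one kernel-verified Lean document; each statement's English description precedes it below -/
import Mathlib

section
/- Let α be an algebraic integer with minimal polynomial f(X) over Q, and let p be a rational prime such that f(X) mod p is a separable polynomial in F_p[X]. Then the product of all maximal ideals of Z[α] lying above p equals the principal ideal p·Z[α]. -/
open Polynomial

/-- Product of a finset of maximal ideals equals its infimum. -/
lemma my_prod_eq_inf {R : Type*} [CommRing R] (s : Finset (Ideal R))
    (h : ∀ 𝔭 ∈ s, 𝔭.IsMaximal) : ∏ 𝔭 ∈ s, 𝔭 = s.inf id := by
  classical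
  induction s using Finset.induction_on with
  | empty => simp
  | @insert a s ha ih =>
    rw [Finset.prod_insert ha, Finset.inf_insert,
      ih (fun 𝔭 h𝔭 => h _ (Finset.mem_insert_of_mem h𝔭))]
    have hcop : IsCoprime a (s.inf id) := by
      rw [Finset.inf_eq_iInf]
      exact Ideal.isCoprime_biInf (fun j hj => by
        rw [Ideal.isCoprime_iff_sup_eq]
        exact Ideal.IsMaximal.coprime_of_ne (h a (Finset.mem_insert_self a s))
          (h j (Finset.mem_insert_of_mem hj)) (fun e => ha (e ▸ hj)))
    rw [Ideal.mul_eq_inf_of_coprime hcop.sup_eq]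
    rfl

set_option maxHeartbeats 2000000 in
set_option synthInstance.maxHeartbeats 1000000 in
/-- Let `α` be an algebraic integer with minimal polynomial `f`, and `p` a rational prime such
that `f mod p` is separable (no repeated irreducible factors, i.e. squarefree).  Then the
product of all maximal ideals of `ℤ[α]` lying above `p` equals the principal ideal `p·ℤ[α]`. -/
theorem stmt_7 (α : ℂ) (hα : IsIntegral ℤ α) (p : ℕ) (hp : p.Prime)
    (hsep : Squarefree ((minpoly ℤ α).map (Int.castRingHom (ZMod p)))) :
    ∃ s : Finset (Ideal (Algebra.adjoin ℤ ({α} : Set ℂ))),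
      (∀ 𝔭 : Ideal (Algebra.adjoin ℤ ({α} : Set ℂ)),
        𝔭 ∈ s ↔ 𝔭.IsMaximal ∧
          𝔭.comap (algebraMap ℤ (Algebra.adjoin ℤ ({α} : Set ℂ))) =
            Ideal.span {(p : ℤ)}) ∧
      ∏ 𝔭 ∈ s, 𝔭 = Ideal.span {(p : Algebra.adjoin ℤ ({α} : Set ℂ))} := by
  classical
  haveI : Fact p.Prime := ⟨hp⟩
  set A := Algebra.adjoin ℤ ({α} : Set ℂ) with hA
  set f := minpoly ℤ α with hfdef
  set g := f.map (Int.castRingHom (ZMod p)) with hgdef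
  set I : Ideal A := Ideal.span {(p : A)} with hIdef
  set P : Ideal ℤ := Ideal.span {(p : ℤ)} with hPdef
  -- the chain of ring isomorphisms  A ⧸ I ≃ (ZMod p)[X] ⧸ (g)
  have e1 : AdjoinRoot f ≃+* A := (minpoly.equivAdjoin hα).toRingEquiv
  set J : Ideal (AdjoinRoot f) := P.map (AdjoinRoot.of f) with hJdef
  have hJ : J = Ideal.span {(p : AdjoinRoot f)} := by
    rw [hJdef, hPdef, Ideal.map_span, Set.image_singleton, map_natCast]
  have hIm : I = J.map (e1 : AdjoinRoot f →+* A) := by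
    rw [hJ, Ideal.map_span, Set.image_singleton, map_natCast]
  have e2 : (AdjoinRoot f ⧸ J) ≃+* A ⧸ I := Ideal.quotientEquiv J I e1 hIm
  have e3 : (AdjoinRoot f ⧸ J) ≃+*
      ((ℤ ⧸ P)[X] ⧸ Ideal.span {f.map (Ideal.Quotient.mk P)}) :=
    AdjoinRoot.quotAdjoinRootEquivQuotPolynomialQuot P f
  set ζ : (ℤ ⧸ P) ≃+* ZMod p := Int.quotientSpanNatEquivZMod p with hζ
  have hcomp : (ζ : (ℤ ⧸ P) →+* ZMod p).comp (Ideal.Quotient.mk P) =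
      Int.castRingHom (ZMod p) := Subsingleton.elim _ _
  have h4 : Ideal.span {g} =
      (Ideal.span {f.map (Ideal.Quotient.mk P)}).map
        ((Polynomial.mapEquiv ζ : (ℤ ⧸ P)[X] ≃+* (ZMod p)[X]) :
          (ℤ ⧸ P)[X] →+* (ZMod p)[X]) := by
    rw [Ideal.map_span, Set.image_singleton]
    have hel : (↑(Polynomial.mapEquiv ζ) : (ℤ ⧸ P)[X] →+* (ZMod p)[X])
        (f.map (Ideal.Quotient.mk P)) = g := by
      show (f.map (Ideal.Quotient.mk P)).map (ζ : (ℤ ⧸ P) →+* ZMod p) = g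
      rw [Polynomial.map_map, hcomp]
    rw [hel]
  have e4 : ((ℤ ⧸ P)[X] ⧸ Ideal.span {f.map (Ideal.Quotient.mk P)}) ≃+*
      ((ZMod p)[X] ⧸ Ideal.span {g}) :=
    Ideal.quotientEquiv _ _ (Polynomial.mapEquiv ζ) h4
  have E : (A ⧸ I) ≃+* ((ZMod p)[X] ⧸ Ideal.span {g}) :=
    e2.symm.trans (e3.trans e4)
  -- the target quotient is reduced and finite
  have hg0 : g ≠ 0 := ((minpoly.monic hα).map (Int.castRingHom (ZMod p))).ne_zero
  have hred : IsReduced ((ZMod p)[X] ⧸ Ideal.span {g}) :=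
    (Ideal.isRadical_iff_quotient_reduced _).mp
      (isRadical_iff_span_singleton.mp hsep.isRadical)
  have hfin : Finite ((ZMod p)[X] ⧸ Ideal.span {g}) := by
    haveI : Module.Finite (ZMod p) (AdjoinRoot g) := (AdjoinRoot.powerBasis hg0).finite
    exact Module.finite_of_finite (ZMod p) (M := AdjoinRoot g)
  -- transfer to A ⧸ I
  haveI hSfin : Finite (A ⧸ I) := Finite.of_equiv _ E.symm.toEquiv
  have hrad : I.IsRadical := by
    rw [Ideal.isRadical_iff_quotient_reduced]
    refine ⟨fun x hx => ?_⟩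
    apply E.injective
    rw [map_zero]
    exact (hx.map E.toRingHom).eq_zero
  set π : A →+* A ⧸ I := Ideal.Quotient.mk I with hπ
  have hπsurj : Function.Surjective π := Ideal.Quotient.mk_surjective
  have hker : RingHom.ker π = I := Ideal.mk_ker
  -- every prime of A containing I is maximal
  have key : ∀ K : Ideal A, K.IsPrime → I ≤ K → K.IsMaximal := by
    intro K hKp hIK
    haveI := hKp
    have hfacsurj : Function.Surjective (Ideal.Quotient.factor hIK) := by
      intro x
      obtain ⟨a, rfl⟩ := Ideal.Quotient.mk_surjective x
      exact ⟨Ideal.Quotient.mk I a, Ideal.Quotient.factor_mk hIK a⟩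
    haveI : Finite (A ⧸ K) := Finite.of_surjective _ hfacsurj
    exact Ideal.Quotient.maximal_of_isField _ (Finite.isField_of_domain _)
  -- the comap condition is equivalent to containing I
  have hPmax : P.IsMaximal := by
    apply PrincipalIdealRing.isMaximal_of_irreducible
    exact (Nat.prime_iff_prime_int.mp hp).irreducible
  have halg : algebraMap ℤ A (p : ℤ) = (p : A) := by
    rw [algebraMap_int_eq, map_natCast]
  have hcond : ∀ K : Ideal A, K.IsPrime →
      (K.comap (algebraMap ℤ A) = P ↔ I ≤ K) := by
    intro K hKp
    constructor
    · intro h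
      rw [hIdef, Ideal.span_le, Set.singleton_subset_iff]
      have : (p : ℤ) ∈ K.comap (algebraMap ℤ A) := by
        rw [h, hPdef]; exact Ideal.subset_span rfl
      rwa [Ideal.mem_comap, halg] at this
    · intro h
      haveI := hKp
      haveI : (K.comap (algebraMap ℤ A)).IsPrime := Ideal.IsPrime.comap _
      have hle : P ≤ K.comap (algebraMap ℤ A) := by
        rw [hPdef, Ideal.span_le, Set.singleton_subset_iff, SetLike.mem_coe,
          Ideal.mem_comap, halg]
        exact h (Ideal.subset_span rfl)
      exact (hPmax.eq_of_le (Ideal.IsPrime.ne_top ‹_›) hle).symm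
  -- finiteness of the set of maximal ideals above p
  haveI : Finite (Ideal (A ⧸ I)) :=
    Finite.of_injective (fun K : Ideal (A ⧸ I) => (K : Set (A ⧸ I))) SetLike.coe_injective
  set T : Set (Ideal A) :=
    {𝔭 | 𝔭.IsMaximal ∧ 𝔭.comap (algebraMap ℤ A) = P} with hT
  have hTI : ∀ 𝔭 ∈ T, I ≤ 𝔭 := fun 𝔭 h𝔭 => (hcond 𝔭 h𝔭.1.isPrime).mp h𝔭.2
  have hcm : ∀ K : Ideal A, I ≤ K → (K.map π).comap π = K := by
    intro K hIK
    rw [Ideal.comap_map_of_surjective π hπsurj, ← RingHom.ker_eq_comap_bot, hker,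
      sup_eq_left.mpr hIK]
  have hTfin : T.Finite := by
    have himfin : ((fun 𝔭 => Ideal.map π 𝔭) '' T).Finite := Set.toFinite _
    refine Set.Finite.of_finite_image (f := fun 𝔭 => Ideal.map π 𝔭) himfin ?_
    intro x hx y hy hxy
    rw [← hcm x (hTI x hx), ← hcm y (hTI y hy)]
    exact congrArg (Ideal.comap π) hxy
  refine ⟨hTfin.toFinset, fun 𝔭 => hTfin.mem_toFinset, ?_⟩
  have hmaxs : ∀ 𝔭 ∈ hTfin.toFinset, 𝔭.IsMaximal := fun 𝔭 h𝔭 =>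
    (hTfin.mem_toFinset.mp h𝔭).1
  rw [my_prod_eq_inf _ hmaxs]
  apply le_antisymm
  · have hIr : I.radical = I := hrad.radical
    refine le_trans ?_ (le_of_eq hIr)
    rw [Ideal.radical_eq_sInf]
    refine le_sInf ?_
    rintro K ⟨hIK, hKp⟩
    have hKmem : K ∈ hTfin.toFinset :=
      hTfin.mem_toFinset.mpr ⟨key K hKp hIK, (hcond K hKp).mpr hIK⟩
    exact Finset.inf_le hKmem
  · exact Finset.le_inf fun K hK => hTI K (hTfin.mem_toFinset.mp hK)
end

section
/- Let n be a positive integer divisible by the prime p, write n = kq with q = p^r the exact power of p dividing n and gcd(k, p) = 1, and let ζ_n = exp(2πi/n) and ζ_q = ζ_n^k. Then for every maximal ideal 𝔭 of Z[ζ_n] lying above p, the maximal ideal of the localization of Z[ζ_n] at 𝔭 is the principal ideal generated by ζ_q − 1. -/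
set_option maxHeartbeats 1000000
set_option synthInstance.maxHeartbeats 400000

theorem aux_13 (p k : ℕ) (hp : p.Prime) (hk : ¬ p ∣ k) (hk0 : 0 < k)
    (B : Type) [CommRing B] [Algebra.IsIntegral ℤ B]
    (t : B) (hgen : ∀ b : B, ∃ P : Polynomial ℤ, Polynomial.aeval t P = b)
    (𝔭 : Ideal B) [h𝔭p : 𝔭.IsPrime]
    (hπ𝔭 : t ^ k - 1 ∈ 𝔭)
    (hpdvd : (t ^ k - 1) ∣ ((p : ℕ) : B)) :
    IsLocalRing.maximalIdeal (Localization.AtPrime 𝔭) =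
      Ideal.span {algebraMap B (Localization.AtPrime 𝔭) (t ^ k - 1)} := by
  haveI : Fact p.Prime := ⟨hp⟩
  set π : B := t ^ k - 1 with hπ
  set L := Localization.AtPrime 𝔭 with hL
  set f := algebraMap B L with hf
  set J : Ideal L := Ideal.span {f π} with hJ
  have hfπm : f π ∈ IsLocalRing.maximalIdeal L :=
    (IsLocalization.AtPrime.to_map_mem_maximal_iff L 𝔭 π).2 hπ𝔭
  have hJle : J ≤ IsLocalRing.maximalIdeal L := by
    rw [hJ, Ideal.span_le, Set.singleton_subset_iff]; exact hfπm
  have hJtop : J ≠ ⊤ := fun h =>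
    (IsLocalRing.maximalIdeal.isMaximal L).ne_top (top_le_iff.1 (h ▸ hJle))
  haveI : Nontrivial (L ⧸ J) := Ideal.Quotient.nontrivial_iff.mpr hJtop
  set mkJ := Ideal.Quotient.mk J with hmkJ
  have hpJ : f ((p : ℕ) : B) ∈ J := by
    rw [hJ, Ideal.mem_span_singleton]
    exact map_dvd f hpdvd
  have hpQ : ((p : ℕ) : L ⧸ J) = 0 := by
    have h1 : ((p : ℕ) : L ⧸ J) = mkJ (f ((p : ℕ) : B)) := by
      rw [map_natCast f, map_natCast mkJ]
    rw [h1, Ideal.Quotient.eq_zero_iff_mem]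
    exact hpJ
  haveI : CharP (L ⧸ J) p := (CharP.charP_iff_prime_eq_zero hp).2 hpQ
  set s := k.totient with hs
  have hcop : Nat.Coprime p k := (Nat.Prime.coprime_iff_not_dvd hp).2 hk
  have hps1 : (1 : ℕ) ≤ p ^ s := Nat.one_le_pow _ _ hp.pos
  have hdvd : k ∣ p ^ s - 1 := (Nat.modEq_iff_dvd' hps1).mp (Nat.ModEq.pow_totient hcop).symm
  obtain ⟨c, hc⟩ := hdvd
  have hpsc : p ^ s = k * c + 1 := by omega
  have htk : (mkJ (f t)) ^ k = 1 := by
    have h2 : t ^ k = π + 1 := by rw [hπ]; ring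
    have hπ0 : mkJ (f π) = 0 := Ideal.Quotient.eq_zero_iff_mem.2 (Ideal.subset_span rfl)
    rw [← map_pow, ← map_pow, h2, map_add, map_add, map_one, map_one, hπ0, zero_add]
  have hts : (mkJ (f t)) ^ p ^ s = mkJ (f t) := by
    rw [hpsc, pow_add, pow_mul, htk, one_pow, one_mul, pow_one]
  have hfix : ∀ a : B, (mkJ (f a)) ^ p ^ s = mkJ (f a) := by
    intro a
    obtain ⟨P, hP⟩ := hgen a
    haveI : ExpChar (L ⧸ J) p := ExpChar.prime hp
    set χ : B →+* L ⧸ J := mkJ.comp (f : B →+* L) with hχ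
    set φ := iterateFrobenius (L ⧸ J) p s with hφ
    have e1 : χ a = Polynomial.eval₂ (χ.comp (algebraMap ℤ B)) (χ t) P := by
      rw [← hP, Polynomial.aeval_def, Polynomial.hom_eval₂]
    have e2 : φ (χ a) = Polynomial.eval₂ ((φ.comp χ).comp (algebraMap ℤ B)) (φ (χ t)) P := by
      rw [e1, Polynomial.hom_eval₂]
      rfl
    have e3 : (φ.comp χ).comp (algebraMap ℤ B) = χ.comp (algebraMap ℤ B) :=
      Subsingleton.elim _ _
    have e4 : φ (χ t) = χ t := by
      rw [hφ, iterateFrobenius_def]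
      exact hts
    have e5 : φ (χ a) = χ a := by rw [e2, e3, e4, ← e1]
    simpa [hχ, hφ, iterateFrobenius_def] using e5
  have hfrob : ∀ x : L ⧸ J, x ^ p ^ s = x := by
    intro x
    obtain ⟨y, rfl⟩ := Ideal.Quotient.mk_surjective (I := J) x
    obtain ⟨⟨a, s'⟩, hys⟩ := IsLocalization.mk'_surjective 𝔭.primeCompl y
    have hspec : y * f s' = f a := by
      rw [← hys]; exact IsLocalization.mk'_spec L a s'
    have hu : IsUnit (mkJ (f s')) := (IsLocalization.map_units L s').map mkJ
    have h7 : (mkJ y) ^ p ^ s * mkJ (f s') = mkJ y * mkJ (f s') := by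
      calc (mkJ y) ^ p ^ s * mkJ (f s') = (mkJ y) ^ p ^ s * (mkJ (f s')) ^ p ^ s := by
            rw [hfix s'.1]
        _ = (mkJ y * mkJ (f s')) ^ p ^ s := by rw [mul_pow]
        _ = (mkJ (f a)) ^ p ^ s := by rw [← map_mul, hspec]
        _ = mkJ (f a) := hfix a
        _ = mkJ y * mkJ (f s') := by rw [← map_mul, hspec]
    exact hu.mul_right_cancel h7
  haveI : IsReduced (L ⧸ J) := by
    constructor
    rintro a ⟨M, hM⟩
    have h8 : ∀ m : ℕ, a = a ^ (p ^ s) ^ m := by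
      intro m
      induction m with
      | zero => simp
      | succ m ih =>
        rw [pow_succ, pow_mul]
        calc a = a ^ p ^ s := (hfrob a).symm
          _ = (a ^ (p ^ s) ^ m) ^ p ^ s := by rw [← ih]
    have h9 : 1 < p ^ s := by
      have : 1 ≤ s := Nat.totient_pos.2 hk0
      calc 1 < p := hp.one_lt
        _ ≤ p ^ s := Nat.le_self_pow (by omega) p
    have h10 : M < (p ^ s) ^ M := Nat.lt_pow_self h9
    calc a = a ^ (p ^ s) ^ M := h8 M
      _ = a ^ M * a ^ ((p ^ s) ^ M - M) := by rw [← pow_add]; congr 1; omega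
      _ = 0 := by rw [hM, zero_mul]
  refine le_antisymm ?_ hJle
  intro x hx
  have hxnil : IsNilpotent (mkJ x) := by
    have hmem : mkJ x ∈ nilradical (L ⧸ J) := by
      rw [nilradical_eq_sInf]
      refine Ideal.mem_sInf.2 ?_
      rintro P hP
      haveI hPp : P.IsPrime := hP
      have hπP : π ∈ (P.comap mkJ).comap (f : B →+* L) := by
        show mkJ (f π) ∈ P
        have hπ0 : mkJ (f π) = 0 := Ideal.Quotient.eq_zero_iff_mem.2 (Ideal.subset_span rfl)
        rw [hπ0]
        exact P.zero_mem
      have hpP : ((p : ℕ) : B) ∈ (P.comap mkJ).comap (f : B →+* L) := by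
        obtain ⟨c0, hc0⟩ := hpdvd
        rw [hc0]
        exact Ideal.mul_mem_right _ _ hπP
      have hP'le : P.comap mkJ ≤ IsLocalRing.maximalIdeal L :=
        IsLocalRing.le_maximalIdeal (Ideal.IsPrime.ne_top inferInstance)
      have hP₀le : (P.comap mkJ).comap (f : B →+* L) ≤ 𝔭 := by
        have h11 := Ideal.comap_mono (f := (f : B →+* L)) hP'le
        have h12 : (IsLocalRing.maximalIdeal L).comap (f : B →+* L) = 𝔭 :=
          IsLocalization.AtPrime.comap_maximalIdeal L 𝔭
        exact le_trans h11 (le_of_eq h12)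
      have hcomapZ : (((P.comap mkJ).comap (f : B →+* L)).comap (algebraMap ℤ B)).IsMaximal := by
        have hmaxp : (Ideal.span {(p : ℤ)}).IsMaximal :=
          PrincipalIdealRing.isMaximal_of_irreducible
            (Int.prime_iff_natAbs_prime.2 (by simpa using hp)).irreducible
        have hle2 : Ideal.span {(p : ℤ)} ≤
            (((P.comap mkJ).comap (f : B →+* L)).comap (algebraMap ℤ B)) := by
          rw [Ideal.span_le, Set.singleton_subset_iff]
          show algebraMap ℤ B (p : ℤ) ∈ (P.comap mkJ).comap (f : B →+* L)
          have h14 : algebraMap ℤ B (p : ℤ) = ((p : ℕ) : B) := by push_cast; simp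
          rw [h14]
          exact hpP
        have h15 := hmaxp.eq_of_le (Ideal.IsPrime.ne_top inferInstance) hle2
        rw [← h15]
        exact hmaxp
      have hP₀max : (((P.comap mkJ).comap (f : B →+* L))).IsMaximal :=
        Ideal.isMaximal_of_isIntegral_of_isMaximal_comap (R := ℤ) _ hcomapZ
      have hP₀eq : (P.comap mkJ).comap (f : B →+* L) = 𝔭 :=
        hP₀max.eq_of_le h𝔭p.ne_top hP₀le
      have hmap : Ideal.map f 𝔭 = IsLocalRing.maximalIdeal L :=
        Localization.AtPrime.map_eq_maximalIdeal
      have h13 : Ideal.map (f : B →+* L) ((P.comap mkJ).comap (f : B →+* L)) ≤ P.comap mkJ :=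
        Ideal.map_comap_le
      rw [hP₀eq] at h13
      exact h13 (by rw [show Ideal.map (f : B →+* L) 𝔭 = Ideal.map f 𝔭 from rfl, hmap]; exact hx)
    exact mem_nilradical.1 hmem
  have hx0 : mkJ x = 0 := IsReduced.eq_zero _ hxnil
  exact Ideal.Quotient.eq_zero_iff_mem.1 hx0


/-- Let `p` be a prime dividing `n`, write `n = k·q` with `q = p^r` the exact power of `p`
dividing `n` (so `gcd(k,p) = 1`), and let `ζ_n = exp(2πi/n)`, `ζ_q = ζ_n^k`.  Then for every
maximal ideal `𝔭` of `ℤ[ζ_n]` lying above `p`, the maximal ideal of the localization of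
`ℤ[ζ_n]` at `𝔭` is the principal ideal generated by `ζ_q - 1`. -/
theorem stmt_13 (p k r n : ℕ) (hp : p.Prime) (hr : 0 < r) (hk : ¬ p ∣ k)
    (hn : n = k * p ^ r)
    (ζ : ℂ) (hζ : ζ = Complex.exp (2 * Real.pi * Complex.I / n))
    (𝔭 : Ideal (Algebra.adjoin ℤ ({ζ} : Set ℂ))) (h𝔭 : 𝔭.IsMaximal)
    (habove : 𝔭.comap (algebraMap ℤ (Algebra.adjoin ℤ ({ζ} : Set ℂ))) =
      Ideal.span {(p : ℤ)}) :
    haveI : 𝔭.IsPrime := h𝔭.isPrime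
    IsLocalRing.maximalIdeal (Localization.AtPrime 𝔭) =
      Ideal.span {algebraMap (Algebra.adjoin ℤ ({ζ} : Set ℂ)) (Localization.AtPrime 𝔭)
        ((⟨ζ, Algebra.self_mem_adjoin_singleton ℤ ζ⟩ :
          Algebra.adjoin ℤ ({ζ} : Set ℂ)) ^ k - 1)} := by
  haveI : Fact p.Prime := ⟨hp⟩
  haveI h𝔭p : 𝔭.IsPrime := h𝔭.isPrime
  have hq0 : 0 < p ^ r := pow_pos hp.pos r
  haveI : NeZero (p ^ r) := ⟨hq0.ne'⟩
  have hk0 : 0 < k := Nat.pos_of_ne_zero (by rintro rfl; exact hk (dvd_zero p))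
  have hn0 : 0 < n := by rw [hn]; positivity
  have hζprim : IsPrimitiveRoot ζ n := by
    rw [hζ]; exact Complex.isPrimitiveRoot_exp n hn0.ne'
  have hζq : IsPrimitiveRoot (ζ ^ k) (p ^ r) := hζprim.pow hn0 hn
  set ζ' : Algebra.adjoin ℤ ({ζ} : Set ℂ) := ⟨ζ, Algebra.self_mem_adjoin_singleton ℤ ζ⟩ with hζ'
  set π : Algebra.adjoin ℤ ({ζ} : Set ℂ) := ζ' ^ k - 1 with hπ
  have hπcoe : (π : ℂ) = ζ ^ k - 1 := by rw [hπ]; push_cast [hζ']; ring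
  set T := primitiveRoots (p ^ r) ℂ with hT
  have hmemA : ∀ μ ∈ T, μ ∈ Algebra.adjoin ℤ ({ζ} : Set ℂ) := by
    intro μ hμ
    have hμq : μ ^ p ^ r = 1 := ((mem_primitiveRoots hq0).1 hμ).pow_eq_one
    obtain ⟨i, -, hi⟩ := hζq.eq_pow_of_pow_eq_one hμq
    rw [← hi, ← pow_mul]
    exact pow_mem (Algebra.self_mem_adjoin_singleton ℤ ζ) _
  have hprodC : ((p : ℕ) : ℂ) = ∏ μ ∈ T, (1 - μ) := by
    have h2 := Polynomial.eval_one_cyclotomic_prime_pow (R := ℂ) (p := p) (r - 1)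
    rw [Nat.sub_add_cancel hr] at h2
    rw [← h2, Polynomial.cyclotomic_eq_prod_X_sub_primitiveRoots hζq, Polynomial.eval_prod]
    simp
    rfl
  set g : {x // x ∈ T} → Algebra.adjoin ℤ ({ζ} : Set ℂ) :=
    fun μ => ⟨1 - μ.1, sub_mem (one_mem _) (hmemA μ.1 μ.2)⟩ with hg
  have hpA : ((p : ℕ) : Algebra.adjoin ℤ ({ζ} : Set ℂ)) = ∏ μ ∈ T.attach, g μ := by
    apply Subtype.ext
    have hc : ((∏ μ ∈ T.attach, g μ : Algebra.adjoin ℤ ({ζ} : Set ℂ)) : ℂ) = ∏ μ ∈ T, (1 - μ) := by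
      calc ((∏ μ ∈ T.attach, g μ : Algebra.adjoin ℤ ({ζ} : Set ℂ)) : ℂ)
          = ∏ μ ∈ T.attach, ((g μ : Algebra.adjoin ℤ ({ζ} : Set ℂ)) : ℂ) :=
            map_prod (Algebra.adjoin ℤ ({ζ} : Set ℂ)).val _ _
        _ = ∏ μ ∈ T.attach, (1 - (μ.1 : ℂ)) := rfl
        _ = ∏ μ ∈ T, (1 - μ) := Finset.prod_attach _ _
    rw [hc]
    push_cast
    exact hprodC
  have hpmem : ((p : ℕ) : Algebra.adjoin ℤ ({ζ} : Set ℂ)) ∈ 𝔭 := by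
    have h1 : (p : ℤ) ∈ 𝔭.comap (algebraMap ℤ (Algebra.adjoin ℤ ({ζ} : Set ℂ))) := by
      rw [habove]; exact Ideal.subset_span rfl
    have h2 : algebraMap ℤ (Algebra.adjoin ℤ ({ζ} : Set ℂ)) (p : ℤ) ∈ 𝔭 := h1
    simpa using h2
  have hπ𝔭 : π ∈ 𝔭 := by
    have hprod𝔭 : ∏ μ ∈ T.attach, g μ ∈ 𝔭 := hpA ▸ hpmem
    obtain ⟨μ, -, hμ𝔭⟩ := (Ideal.IsPrime.prod_mem_iff).1 hprod𝔭
    have hμprim : IsPrimitiveRoot (μ.1 : ℂ) (p ^ r) := (mem_primitiveRoots hq0).1 (hT ▸ μ.2)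
    obtain ⟨j, -, hj⟩ := hμprim.eq_pow_of_pow_eq_one hζq.pow_eq_one
    set w : Algebra.adjoin ℤ ({ζ} : Set ℂ) := ⟨μ.1, hmemA μ.1 μ.2⟩ with hw
    have hwk : ζ' ^ k = w ^ j := by
      apply Subtype.ext
      push_cast [hζ', hw]
      exact hj.symm
    have hw𝔭 : w - 1 ∈ 𝔭 := by
      have h3 : -(g μ) ∈ 𝔭 := 𝔭.neg_mem hμ𝔭
      have h4 : -(g μ) = w - 1 := by
        apply Subtype.ext; simp [hg, hw]
      rwa [h4] at h3
    have h5 : π = (∑ i ∈ Finset.range j, w ^ i) * (w - 1) := by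
      rw [geom_sum_mul, hπ, hwk]
    rw [h5]
    exact Ideal.mul_mem_left _ _ hw𝔭
  have hζkT : ζ ^ k ∈ T := hT ▸ (mem_primitiveRoots hq0).2 hζq
  have hpdvd : π ∣ ((p : ℕ) : Algebra.adjoin ℤ ({ζ} : Set ℂ)) := by
    have hcA : ∏ μ ∈ T.erase (ζ ^ k), (1 - μ) ∈ Algebra.adjoin ℤ ({ζ} : Set ℂ) :=
      prod_mem fun μ hμ => sub_mem (one_mem _) (hmemA μ (Finset.mem_of_mem_erase hμ))
    refine ⟨-⟨_, hcA⟩, ?_⟩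
    apply Subtype.ext
    push_cast [hπcoe]
    rw [hprodC, ← Finset.mul_prod_erase T _ hζkT]
    ring
  have hgen : ∀ b : (Algebra.adjoin ℤ ({ζ} : Set ℂ)), ∃ P : Polynomial ℤ,
      Polynomial.aeval ζ' P = b := by
    intro b
    have h3 : (b : ℂ) ∈ (Polynomial.aeval (R := ℤ) ζ).range := by
      rw [← Algebra.adjoin_singleton_eq_range_aeval ℤ ζ]; exact b.2
    obtain ⟨P, hP⟩ := (AlgHom.mem_range _).1 h3
    refine ⟨P, Subtype.ext ?_⟩
    rw [← hP]
    exact (Polynomial.aeval_algHom_apply (Algebra.adjoin ℤ ({ζ} : Set ℂ)).val ζ' P).symm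
  haveI : Algebra.IsIntegral ℤ (Algebra.adjoin ℤ ({ζ} : Set ℂ)) := by
    refine Algebra.IsIntegral.adjoin ?_
    rintro x rfl
    exact ⟨Polynomial.X ^ n - Polynomial.C 1, Polynomial.monic_X_pow_sub_C 1 hn0.ne',
      by simp [hζprim.pow_eq_one]⟩
  exact aux_13 p k hp hk hk0 _ ζ' hgen 𝔭 hπ𝔭 hpdvd
end
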